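/- Let n be even, k an odd positive integer, and B_n the addition table of Z_n. Then B_n has no k-plex, i.e., there is no set of kn cells with exactly k cells in each row, exactly k cells in each column, and each symbol occurring exactly k times. -/
import Mathlib


open scoped Classical

/-- A latin square of order `n`: each symbol occurs exactly once in each row and column. -/
def IsLatinSquare {n : ℕ} (L : Fin n → Fin n → Fin n) : Prop :=
  (∀ i, Function.Bijective fun j => L i j) ∧ (∀ j, Function.Bijective fun i => L i j)

/-- A `k`-plex of `L`: a set of cells with exactly `k` in each row, `k` in each column,
and each symbol occurring exactly `k` times. -/
def IsPlex {n : ℕ} (L : Fin n → Fin n → Fin n) (k : ℕ) (K : Finset (Fin n × Fin n)) : Prop :=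
  (∀ i, (K.filter fun p => p.1 = i).card = k) ∧
  (∀ j, (K.filter fun p => p.2 = j).card = k) ∧
  (∀ s, (K.filter fun p => L p.1 p.2 = s).card = k)

/-- `L` has a transversal, i.e. a `1`-plex. -/
def HasTransversal {n : ℕ} (L : Fin n → Fin n → Fin n) : Prop :=
  ∃ K, IsPlex L 1 K

theorem stmt1 (n k : ℕ) (hpos : 0 < n) (hn : Even n) (hk : Odd k) :
    ¬ ∃ K, IsPlex (fun i j : Fin n => i + j) k K := by
  rintro ⟨K, hr, hc, hs⟩
  set f : Fin n → ZMod n := fun a => ((a : ℕ) : ZMod n) with hf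
  set T : ZMod n := ∑ x : Fin n, f x with hT
  have key : ∀ (g : Fin n × Fin n → Fin n),
      (∀ x, (K.filter fun p => g p = x).card = k) →
      ∑ p ∈ K, f (g p) = k • T := by
    intro g h
    rw [← Finset.sum_fiberwise K g (fun p => f (g p))]
    rw [hT, Finset.smul_sum]
    refine Finset.sum_congr rfl fun x _ => ?_
    have : ∑ p ∈ K.filter (fun p => g p = x), f (g p)
        = ∑ p ∈ K.filter (fun p => g p = x), f x := by
      refine Finset.sum_congr rfl fun p hp => ?_
      rw [(Finset.mem_filter.mp hp).2]
    rw [this, Finset.sum_const, h x]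
  have h1 : ∑ p ∈ K, f p.1 = k • T := key (fun p => p.1) hr
  have h2 : ∑ p ∈ K, f p.2 = k • T := key (fun p => p.2) hc
  have h3 : ∑ p ∈ K, f (p.1 + p.2) = k • T := key (fun p => p.1 + p.2) hs
  have hadd : ∀ p : Fin n × Fin n, f (p.1 + p.2) = f p.1 + f p.2 := by
    intro p
    simp only [hf, Fin.val_add, ZMod.natCast_mod, Nat.cast_add]
  have hzero : k • T = 0 := by
    have : ∑ p ∈ K, f (p.1 + p.2) = ∑ p ∈ K, f p.1 + ∑ p ∈ K, f p.2 := by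
      rw [← Finset.sum_add_distrib]
      exact Finset.sum_congr rfl fun p _ => hadd p
    rw [h3, h1, h2] at this
    nth_rewrite 1 [← add_zero (k • T)] at this
    exact (add_left_cancel this).symm
  -- compute T as a natural number cast
  have hTval : T = ((n * (n - 1) / 2 : ℕ) : ZMod n) := by
    rw [hT]
    have : ∑ x : Fin n, f x = ((∑ x : Fin n, (x : ℕ) : ℕ) : ZMod n) := by
      push_cast; rfl
    rw [this, Fin.sum_univ_eq_sum_range (fun i => i), Finset.sum_range_id]
  haveI : NeZero n := ⟨hpos.ne'⟩
  have hdvd : (n : ℕ) ∣ k * (n * (n - 1) / 2) := by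
    have hcast : ((k * (n * (n - 1) / 2) : ℕ) : ZMod n) = 0 := by
      push_cast
      rw [← hTval, ← nsmul_eq_mul]
      exact hzero
    exact (ZMod.natCast_eq_zero_iff _ _).mp hcast
  obtain ⟨m, hm⟩ := hn
  have hmn : n = 2 * m := by omega
  have hmpos : 0 < m := by omega
  have hhalf : n * (n - 1) / 2 = m * (n - 1) := by
    rw [hmn, mul_assoc, Nat.mul_div_cancel_left _ (by norm_num : 0 < 2)]
  rw [hhalf, hmn] at hdvd
  obtain ⟨s, hs'⟩ := hdvd
  have hts : k * (2 * m - 1) = 2 * s := by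
    have h' : m * (k * (2 * m - 1)) = m * (2 * s) := by
      rw [show m * (k * (2 * m - 1)) = k * (m * (2 * m - 1)) by ring, hs']; ring
    exact Nat.eq_of_mul_eq_mul_left hmpos h'
  have hodd : Odd (k * (2 * m - 1)) := hk.mul ⟨m - 1, by omega⟩
  obtain ⟨a, ha⟩ := hodd
  omega
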